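/- Define Z3 = v1²Ω / (A²G+(1−V²)^{(2−γ)/2}). Along any solution of the tilted Bianchi type VI_{-1/9} system lying in the invariant set v2 = v3 = 0 (so V = |v1|), with Ω > 0, A ≠ 0 and v1² < 1, one has the identity Z3' = −(2−γ)(3−2A v1)·Z3. In particular Z3 is strictly monotonically decreasing there whenever Z3 > 0 and γ < 2. -/

import Mathlib

noncomputable section

namespace BianchiVI

/-- squared tilt speed `V² = v1² + v2² + v3²`. -/
def Vsq (v1 v2 v3 : ℝ) : ℝ := v1^2 + v2^2 + v3^2

/-- `G₊ = 1 + (γ-1) V²`. -/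
def Gp (γ v1 v2 v3 : ℝ) : ℝ := 1 + (γ - 1) * Vsq v1 v2 v3

/-- total shear `Σ²`. -/
def Sig2 (sp sm s12 s13 s23 : ℝ) : ℝ := sp^2 + sm^2 + s12^2 + s13^2 + s23^2

/-- deceleration parameter `q`. -/
def qdef (γ sp sm s12 s13 s23 Om v1 v2 v3 : ℝ) : ℝ :=
  2 * Sig2 sp sm s12 s13 s23
    + (1/2) * ((3*γ - 2) + (2 - γ) * Vsq v1 v2 v3) * Om / Gp γ v1 v2 v3

/-- `P = Σ_{ab} v^a v^b · V²`, so that `S = P/V²`. -/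
def Pdef (sp sm s12 s13 s23 v1 v2 v3 : ℝ) : ℝ :=
  -2*sp*v1^2 + (sp + Real.sqrt 3 * sm) * v2^2 + (sp - Real.sqrt 3 * sm) * v3^2
    + 2*Real.sqrt 3*(s12*v1*v2 + s13*v1*v3 + s23*v2*v3)

/-- `S = Σ_{ab} c^a c^b`. -/
def Sdef (sp sm s12 s13 s23 v1 v2 v3 : ℝ) : ℝ :=
  if 0 < Vsq v1 v2 v3 then Pdef sp sm s12 s13 s23 v1 v2 v3 / Vsq v1 v2 v3 else 0

/-- the quantity `T`. -/
def Tdef (γ sp sm s12 s13 s23 A v1 v2 v3 : ℝ) : ℝ :=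
  (((3*γ - 4) - 2*(γ-1)*A*v1) * (1 - Vsq v1 v2 v3)
      + (2 - γ) * Pdef sp sm s12 s13 s23 v1 v2 v3)
    / (1 - (γ - 1) * Vsq v1 v2 v3)

/-- right-hand side of the evolution equation. -/
def rhsSp (γ sp sm s12 s13 s23 N lam A Om v1 v2 v3 : ℝ) : ℝ :=
  (qdef γ sp sm s12 s13 s23 Om v1 v2 v3 - 2) * sp + 3*(s12^2 + s13^2) - 2*N^2 + (γ*Om/(2*(Gp γ v1 v2 v3))) * (-2*v1^2 + v2^2 + v3^2)

/-- right-hand side of the evolution equation. -/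
def rhsSm (γ sp sm s12 s13 s23 N lam A Om v1 v2 v3 : ℝ) : ℝ :=
  (qdef γ sp sm s12 s13 s23 Om v1 v2 v3 - 2 - 2*Real.sqrt 3*s23*lam) * sm + Real.sqrt 3*(s12^2 - s13^2) + 2*A*N + (Real.sqrt 3*γ*Om/(2*(Gp γ v1 v2 v3))) * (v2^2 - v3^2)

/-- right-hand side of the evolution equation. -/
def rhsS12 (γ sp sm s12 s13 s23 N lam A Om v1 v2 v3 : ℝ) : ℝ :=
  (qdef γ sp sm s12 s13 s23 Om v1 v2 v3 - 2 - 3*sp - Real.sqrt 3*sm) * s12 - Real.sqrt 3*(s23 + sm*lam)*s13 + (Real.sqrt 3*γ*Om/(Gp γ v1 v2 v3))*v1*v2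

/-- right-hand side of the evolution equation. -/
def rhsS13 (γ sp sm s12 s13 s23 N lam A Om v1 v2 v3 : ℝ) : ℝ :=
  (qdef γ sp sm s12 s13 s23 Om v1 v2 v3 - 2 - 3*sp + Real.sqrt 3*sm) * s13 - Real.sqrt 3*(s23 - sm*lam)*s12 + (Real.sqrt 3*γ*Om/(Gp γ v1 v2 v3))*v1*v3

/-- right-hand side of the evolution equation. -/
def rhsS23 (γ sp sm s12 s13 s23 N lam A Om v1 v2 v3 : ℝ) : ℝ :=
  (qdef γ sp sm s12 s13 s23 Om v1 v2 v3 - 2) * s23 - 2*Real.sqrt 3*N^2*lam + 2*Real.sqrt 3*lam*sm^2 + 2*Real.sqrt 3*s12*s13 + (Real.sqrt 3*γ*Om/(Gp γ v1 v2 v3))*v2*v3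

/-- right-hand side of the evolution equation. -/
def rhsN (γ sp sm s12 s13 s23 N lam A Om v1 v2 v3 : ℝ) : ℝ :=
  (qdef γ sp sm s12 s13 s23 Om v1 v2 v3 + 2*sp + 2*Real.sqrt 3*s23*lam) * N

/-- right-hand side of the evolution equation. -/
def rhsLam (γ sp sm s12 s13 s23 N lam A Om v1 v2 v3 : ℝ) : ℝ :=
  2*Real.sqrt 3*s23*(1 - lam^2)

/-- right-hand side of the evolution equation. -/
def rhsA (γ sp sm s12 s13 s23 N lam A Om v1 v2 v3 : ℝ) : ℝ :=
  (qdef γ sp sm s12 s13 s23 Om v1 v2 v3 + 2*sp) * A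

/-- right-hand side of the evolution equation. -/
def rhsOm (γ sp sm s12 s13 s23 N lam A Om v1 v2 v3 : ℝ) : ℝ :=
  (Om/(Gp γ v1 v2 v3)) * (2*(qdef γ sp sm s12 s13 s23 Om v1 v2 v3) - (3*γ-2) + 2*γ*A*v1 + (2*(qdef γ sp sm s12 s13 s23 Om v1 v2 v3)*(γ-1) - (2-γ)) * Vsq v1 v2 v3 - γ*(Pdef sp sm s12 s13 s23 v1 v2 v3))

/-- right-hand side of the evolution equation. -/
def rhsV1 (γ sp sm s12 s13 s23 N lam A Om v1 v2 v3 : ℝ) : ℝ :=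
  ((Tdef γ sp sm s12 s13 s23 A v1 v2 v3) + 2*sp)*v1 - 2*Real.sqrt 3*s13*v3 - 2*Real.sqrt 3*s12*v2 - A*(v2^2 + v3^2) - Real.sqrt 3*N*(v2^2 - v3^2)

/-- right-hand side of the evolution equation. -/
def rhsV2 (γ sp sm s12 s13 s23 N lam A Om v1 v2 v3 : ℝ) : ℝ :=
  ((Tdef γ sp sm s12 s13 s23 A v1 v2 v3) - sp - Real.sqrt 3*sm)*v2 - Real.sqrt 3*(s23 + sm*lam)*v3 + Real.sqrt 3*lam*N*v1*v3 + (A + Real.sqrt 3*N)*v1*v2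

/-- right-hand side of the evolution equation. -/
def rhsV3 (γ sp sm s12 s13 s23 N lam A Om v1 v2 v3 : ℝ) : ℝ :=
  ((Tdef γ sp sm s12 s13 s23 A v1 v2 v3) - sp + Real.sqrt 3*sm)*v3 - Real.sqrt 3*(s23 - sm*lam)*v2 - Real.sqrt 3*lam*N*v1*v2 + (A - Real.sqrt 3*N)*v1*v3

/-- the five constraint equations (C1)-(C5). -/
def SatisfiesConstraints (γ sp sm s12 s13 s23 N lam A Om v1 v2 v3 : ℝ) : Prop :=
  Sig2 sp sm s12 s13 s23 + A^2 + N^2 + Om = 1 ∧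
  2*sp*A + 2*sm*N + γ*Om*v1/(Gp γ v1 v2 v3) = 0 ∧
  -(s12*(N + Real.sqrt 3*A) + s13*lam*N) + γ*Om*v2/(Gp γ v1 v2 v3) = 0 ∧
  s13*(N - Real.sqrt 3*A) + s12*lam*N + γ*Om*v3/(Gp γ v1 v2 v3) = 0 ∧
  3*A^2 = (1 - lam^2)*N^2

/-- equilibrium point: all twelve right-hand sides vanish. -/
def IsEquilibrium (γ sp sm s12 s13 s23 N lam A Om v1 v2 v3 : ℝ) : Prop :=
  rhsSp γ sp sm s12 s13 s23 N lam A Om v1 v2 v3 = 0 ∧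
  rhsSm γ sp sm s12 s13 s23 N lam A Om v1 v2 v3 = 0 ∧
  rhsS12 γ sp sm s12 s13 s23 N lam A Om v1 v2 v3 = 0 ∧
  rhsS13 γ sp sm s12 s13 s23 N lam A Om v1 v2 v3 = 0 ∧
  rhsS23 γ sp sm s12 s13 s23 N lam A Om v1 v2 v3 = 0 ∧
  rhsN γ sp sm s12 s13 s23 N lam A Om v1 v2 v3 = 0 ∧
  rhsLam γ sp sm s12 s13 s23 N lam A Om v1 v2 v3 = 0 ∧
  rhsA γ sp sm s12 s13 s23 N lam A Om v1 v2 v3 = 0 ∧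
  rhsOm γ sp sm s12 s13 s23 N lam A Om v1 v2 v3 = 0 ∧
  rhsV1 γ sp sm s12 s13 s23 N lam A Om v1 v2 v3 = 0 ∧
  rhsV2 γ sp sm s12 s13 s23 N lam A Om v1 v2 v3 = 0 ∧
  rhsV3 γ sp sm s12 s13 s23 N lam A Om v1 v2 v3 = 0

/-- a solution of the tilted Bianchi type VI_(-1/9) system on the set `dom`:
the twelve evolution equations and the five constraints hold at every `τ ∈ dom`. -/
def IsSolutionOn (γ : ℝ) (dom : Set ℝ) (sp sm s12 s13 s23 N lam A Om v1 v2 v3 : ℝ → ℝ) : Prop :=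
  ∀ τ ∈ dom,
    (HasDerivAt sp (rhsSp γ (sp τ) (sm τ) (s12 τ) (s13 τ) (s23 τ) (N τ) (lam τ) (A τ) (Om τ) (v1 τ) (v2 τ) (v3 τ)) τ ∧
    HasDerivAt sm (rhsSm γ (sp τ) (sm τ) (s12 τ) (s13 τ) (s23 τ) (N τ) (lam τ) (A τ) (Om τ) (v1 τ) (v2 τ) (v3 τ)) τ ∧
    HasDerivAt s12 (rhsS12 γ (sp τ) (sm τ) (s12 τ) (s13 τ) (s23 τ) (N τ) (lam τ) (A τ) (Om τ) (v1 τ) (v2 τ) (v3 τ)) τ ∧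
    HasDerivAt s13 (rhsS13 γ (sp τ) (sm τ) (s12 τ) (s13 τ) (s23 τ) (N τ) (lam τ) (A τ) (Om τ) (v1 τ) (v2 τ) (v3 τ)) τ ∧
    HasDerivAt s23 (rhsS23 γ (sp τ) (sm τ) (s12 τ) (s13 τ) (s23 τ) (N τ) (lam τ) (A τ) (Om τ) (v1 τ) (v2 τ) (v3 τ)) τ ∧
    HasDerivAt N (rhsN γ (sp τ) (sm τ) (s12 τ) (s13 τ) (s23 τ) (N τ) (lam τ) (A τ) (Om τ) (v1 τ) (v2 τ) (v3 τ)) τ ∧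
    HasDerivAt lam (rhsLam γ (sp τ) (sm τ) (s12 τ) (s13 τ) (s23 τ) (N τ) (lam τ) (A τ) (Om τ) (v1 τ) (v2 τ) (v3 τ)) τ ∧
    HasDerivAt A (rhsA γ (sp τ) (sm τ) (s12 τ) (s13 τ) (s23 τ) (N τ) (lam τ) (A τ) (Om τ) (v1 τ) (v2 τ) (v3 τ)) τ ∧
    HasDerivAt Om (rhsOm γ (sp τ) (sm τ) (s12 τ) (s13 τ) (s23 τ) (N τ) (lam τ) (A τ) (Om τ) (v1 τ) (v2 τ) (v3 τ)) τ ∧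
    HasDerivAt v1 (rhsV1 γ (sp τ) (sm τ) (s12 τ) (s13 τ) (s23 τ) (N τ) (lam τ) (A τ) (Om τ) (v1 τ) (v2 τ) (v3 τ)) τ ∧
    HasDerivAt v2 (rhsV2 γ (sp τ) (sm τ) (s12 τ) (s13 τ) (s23 τ) (N τ) (lam τ) (A τ) (Om τ) (v1 τ) (v2 τ) (v3 τ)) τ ∧
    HasDerivAt v3 (rhsV3 γ (sp τ) (sm τ) (s12 τ) (s13 τ) (s23 τ) (N τ) (lam τ) (A τ) (Om τ) (v1 τ) (v2 τ) (v3 τ)) τ) ∧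
    SatisfiesConstraints γ (sp τ) (sm τ) (s12 τ) (s13 τ) (s23 τ) (N τ) (lam τ) (A τ) (Om τ) (v1 τ) (v2 τ) (v3 τ)

/-- the monotone function `Z3`. -/
def Z3fun (γ : ℝ) (A Om v1 v2 v3 : ℝ → ℝ) : ℝ → ℝ := fun τ =>
  (v1 τ)^2 * Om τ
    / ((A τ)^2 * Gp γ (v1 τ) (v2 τ) (v3 τ)
        * (1 - Vsq (v1 τ) (v2 τ) (v3 τ)) ^ (((2-γ)/2 : ℝ)))

theorem Z3_evolution (γ : ℝ) (hγ : 0 < γ ∧ γ < 2)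
    (sp sm s12 s13 s23 N lam A Om v1 v2 v3 : ℝ → ℝ)
    (hsol : IsSolutionOn γ Set.univ sp sm s12 s13 s23 N lam A Om v1 v2 v3)
    (hv2 : ∀ τ : ℝ, v2 τ = 0) (hv3 : ∀ τ : ℝ, v3 τ = 0)
    (hOm : ∀ τ : ℝ, 0 < Om τ)
    (hA : ∀ τ : ℝ, A τ ≠ 0)
    (hv1 : ∀ τ : ℝ, (v1 τ)^2 < 1) :
    (∀ τ : ℝ, HasDerivAt (Z3fun γ A Om v1 v2 v3)
        (-(2-γ) * (3 - 2*(A τ)*(v1 τ)) * Z3fun γ A Om v1 v2 v3 τ) τ) ∧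
    ((∀ τ : ℝ, 0 < Z3fun γ A Om v1 v2 v3 τ) → StrictAnti (Z3fun γ A Om v1 v2 v3)) := by
  have hfun : Z3fun γ A Om v1 v2 v3 = fun t => (v1 t)^2 * Om t /
      ((A t)^2 * (1 + (γ-1)*(v1 t)^2) * (1 - (v1 t)^2) ^ (((2-γ)/2 : ℝ))) := by
    funext t
    simp [Z3fun, Gp, Vsq, hv2 t, hv3 t]
  have key : ∀ τ : ℝ, HasDerivAt (Z3fun γ A Om v1 v2 v3)
      (-(2-γ) * (3 - 2*(A τ)*(v1 τ)) * Z3fun γ A Om v1 v2 v3 τ) τ := by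
    intro τ
    obtain ⟨hev, hcon⟩ := hsol τ (Set.mem_univ τ)
    obtain ⟨_, _, _, _, _, _, _, hdA, hdOm, hdv1, _, _⟩ := hev
    rw [hv2 τ, hv3 τ] at hdA hdOm hdv1
    have hm : 0 < 1 - (v1 τ)^2 := by nlinarith [hv1 τ]
    have hGpos : 0 < 1 + (γ-1)*(v1 τ)^2 := by nlinarith [hv1 τ, sq_nonneg (v1 τ)]
    have hDpos : 0 < 1 - (γ-1)*(v1 τ)^2 := by nlinarith [hv1 τ, sq_nonneg (v1 τ)]
    have hR : 0 < (1 - (v1 τ)^2) ^ (((2-γ)/2 : ℝ)) := Real.rpow_pos_of_pos hm _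
    have hnum := (hdv1.pow 2).mul hdOm
    have hG' := ((hdv1.pow 2).const_mul (γ-1)).const_add (1 : ℝ)
    have hm' := (hasDerivAt_const τ (1:ℝ)).sub (hdv1.pow 2)
    have hRd := hm'.rpow_const (p := ((2-γ)/2 : ℝ)) (Or.inl hm.ne')
    have hden := ((hdA.pow 2).mul hG').mul hRd
    have hden0 : (A τ)^2 * (1 + (γ-1)*(v1 τ)^2) * (1 - (v1 τ)^2) ^ (((2-γ)/2 : ℝ)) ≠ 0 :=
      mul_ne_zero (mul_ne_zero (pow_ne_zero 2 (hA τ)) hGpos.ne') hR.ne'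
    have hZ := hnum.div hden hden0
    rw [hfun]
    convert hZ using 1
    · rfl
    · rfl
    · funext t; rfl
    push_cast
    simp only [rhsV1, rhsOm, rhsA, Tdef, Pdef, Vsq, Gp]
    norm_num
    generalize qdef γ (sp τ) (sm τ) (s12 τ) (s13 τ) (s23 τ) (Om τ) (v1 τ) 0 0 = q
    rw [Real.rpow_sub_one hm.ne']
    set R := (1 - (v1 τ)^2) ^ (((2-γ)/2 : ℝ)) with hRdef
    have h2 : (1 : ℝ) - (γ-1)*(v1 τ)^2 ≠ 0 := hDpos.ne'
    have h3 : (1 : ℝ) + (γ-1)*(v1 τ)^2 ≠ 0 := hGpos.ne'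
    have h2' : (1 : ℝ) - (v1 τ)^2*(γ-1) ≠ 0 := by rw [mul_comm]; exact h2
    have h3' : (1 : ℝ) + (v1 τ)^2*(γ-1) ≠ 0 := by rw [mul_comm]; exact h3
    field_simp
    ring
  refine ⟨key, fun hZpos => ?_⟩
  apply strictAnti_of_hasDerivAt_neg
      (f' := fun τ => -(2-γ) * (3 - 2*(A τ)*(v1 τ)) * Z3fun γ A Om v1 v2 v3 τ) key
  intro τ
  obtain ⟨_, hcon⟩ := hsol τ (Set.mem_univ τ)
  obtain ⟨hc1, _, _, _, _⟩ := hcon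
  have hA2 : (A τ)^2 ≤ 1 := by
    simp only [Sig2] at hc1
    nlinarith [hOm τ, sq_nonneg (sp τ), sq_nonneg (sm τ), sq_nonneg (s12 τ),
      sq_nonneg (s13 τ), sq_nonneg (s23 τ), sq_nonneg (N τ)]
  have h3au : 2*(A τ)*(v1 τ) < 3 := by
    nlinarith [hv1 τ, sq_nonneg (A τ - v1 τ), sq_nonneg (A τ + v1 τ)]
  have h1 : -(2-γ) * (3 - 2*(A τ)*(v1 τ)) < 0 := by nlinarith [hγ.2]
  exact mul_neg_of_neg_of_pos h1 (hZpos τ)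


end BianchiVI
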